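/- Let f, g : [0,∞) → ℝ be continuous functions, convex on [0,∞), taking values in [0,1], with f(0) = g(0) = 1 and with f(t) → 0 and g(t) → 0 as t → ∞. Then the product f·g is continuous, convex on [0,∞), takes values in [0,1], satisfies (f·g)(0) = 1, and (f·g)(t) → 0 as t → ∞. -/
import Mathlib


open Real Set Filter

/-- A convex function on `[0,∞)` with values in `[0,1]` is nonincreasing. -/
lemma antitoneOn_of_convexOn_bounded (f : ℝ → ℝ)
    (hconv : ConvexOn ℝ (Set.Ici 0) f)
    (hmem : ∀ x ∈ Set.Ici (0:ℝ), f x ∈ Set.Icc (0:ℝ) 1) :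
    AntitoneOn f (Set.Ici 0) := by
  intro x hx y hy hxy
  rcases eq_or_lt_of_le hxy with rfl | hxy'
  · exact le_rfl
  · by_contra h
    push_neg at h
    set s := (f y - f x) / (y - x) with hs
    have hs_pos : 0 < s := div_pos (by linarith) (by linarith)
    have hspos2 : 0 < 2 / s := by positivity
    set z := y + 2 / s with hz
    have hyz : y < z := by rw [hz]; linarith
    have hzmem : z ∈ Set.Ici (0:ℝ) := le_trans hy (le_of_lt hyz)
    have hslope := hconv.slope_mono_adjacent hx hzmem hxy' hyz
    have h2 : s * (z - y) ≤ f z - f y := by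
      have hzy : 0 < z - y := by linarith
      calc s * (z - y) = (f y - f x) / (y - x) * (z - y) := rfl
        _ ≤ (f z - f y) / (z - y) * (z - y) := by
            apply mul_le_mul_of_nonneg_right hslope (le_of_lt hzy)
        _ = f z - f y := by field_simp
    have hzv : s * (z - y) = 2 := by
      have : z - y = 2 / s := by simp [hz]
      rw [this]; field_simp
    have hfz := hmem z hzmem
    have hfy := hmem y hy
    rw [hzv] at h2
    have := hfz.2
    have := hfy.1
    linarith

/-- The class `H₁` of continuous convex functions on `[0,∞)` with values in `[0,1]`,
value `1` at `0`, and limit `0` at infinity, is closed under pointwise multiplication. -/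
theorem H1_closed_under_mul (f g : ℝ → ℝ)
    (hf_cont : ContinuousOn f (Set.Ici 0)) (hg_cont : ContinuousOn g (Set.Ici 0))
    (hf_conv : ConvexOn ℝ (Set.Ici 0) f) (hg_conv : ConvexOn ℝ (Set.Ici 0) g)
    (hf_mem : ∀ x ∈ Set.Ici (0:ℝ), f x ∈ Set.Icc (0:ℝ) 1)
    (hg_mem : ∀ x ∈ Set.Ici (0:ℝ), g x ∈ Set.Icc (0:ℝ) 1)
    (hf0 : f 0 = 1) (hg0 : g 0 = 1)
    (hf_lim : Filter.Tendsto f Filter.atTop (nhds 0))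
    (hg_lim : Filter.Tendsto g Filter.atTop (nhds 0)) :
    ContinuousOn (fun t => f t * g t) (Set.Ici 0) ∧
    ConvexOn ℝ (Set.Ici 0) (fun t => f t * g t) ∧
    (∀ x ∈ Set.Ici (0:ℝ), f x * g x ∈ Set.Icc (0:ℝ) 1) ∧
    f 0 * g 0 = 1 ∧
    Filter.Tendsto (fun t => f t * g t) Filter.atTop (nhds 0) := by
  have hf_anti := antitoneOn_of_convexOn_bounded f hf_conv hf_mem
  have hg_anti := antitoneOn_of_convexOn_bounded g hg_conv hg_mem
  refine ⟨hf_cont.mul hg_cont, ?_, ?_, by rw [hf0, hg0]; ring, ?_⟩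
  · refine ⟨convex_Ici 0, fun x hx y hy a b ha hb hab => ?_⟩
    have hxy_mem : a • x + b • y ∈ Set.Ici (0:ℝ) :=
      (convex_Ici 0) hx hy ha hb hab
    have hfx := hf_mem x hx
    have hfy := hf_mem y hy
    have hgx := hg_mem x hx
    have hgy := hg_mem y hy
    have hfc := hf_conv.2 hx hy ha hb hab
    have hgc := hg_conv.2 hx hy ha hb hab
    have hfm := hf_mem _ hxy_mem
    have hgm := hg_mem _ hxy_mem
    have hcheb : 0 ≤ (f x - f y) * (g x - g y) := by
      rcases le_total x y with hle | hle
      · have h1 := hf_anti hx hy hle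
        have h2 := hg_anti hx hy hle
        exact mul_nonneg (by linarith) (by linarith)
      · have h1 := hf_anti hy hx hle
        have h2 := hg_anti hy hx hle
        nlinarith [h1, h2]
    simp only [smul_eq_mul] at *
    have step1 : f (a * x + b * y) * g (a * x + b * y) ≤
        (a * f x + b * f y) * (a * g x + b * g y) :=
      mul_le_mul hfc hgc hgm.1 (by nlinarith [hfx.1, hfy.1])
    have step2 : (a * f x + b * f y) * (a * g x + b * g y) ≤
        a * (f x * g x) + b * (f y * g y) := by
      have hb' : b = 1 - a := by linarith
      have key : (a * f x + b * f y) * (a * g x + b * g y)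
          = a * (f x * g x) + b * (f y * g y)
            - a * b * ((f x - f y) * (g x - g y)) := by
        rw [hb']; ring
      rw [key]
      nlinarith [mul_nonneg (mul_nonneg ha hb) hcheb]
    linarith
  · intro x hx
    have h1 := hf_mem x hx
    have h2 := hg_mem x hx
    exact ⟨mul_nonneg h1.1 h2.1, mul_le_one₀ h1.2 h2.1 h2.2⟩
  · have := hf_lim.mul hg_lim
    simpa using this
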